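/- Adjugate identity used in DREM: for any n×n real matrix A and vectors Ψ, Θ ∈ ℝⁿ with Ψ = A Θ, the k-th component of adj(A) Ψ equals det(A) · Θ_k for every k; moreover if det(A(t))² is not integrable on [0,∞) (for a measurable family A(t)), then for each k the scalar regression ζ_k(t) = det(A(t)) Θ_k carries enough excitation that the gradient estimator θ̂_k' = γ det(A(t)) (ζ_k(t) - det(A(t)) θ̂_k) with constant true Θ_k satisfies θ̂_k(t) → Θ_k. -/

import Mathlib

open Matrix Filter Real

theorem stmt_17 (n : ℕ) (A : ℝ → Matrix (Fin n) (Fin n) ℝ) (hA : Continuous A)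
    (Θ : Fin n → ℝ) (Ψ : ℝ → Fin n → ℝ) (hΨ : ∀ t, Ψ t = (A t).mulVec Θ) :
    (∀ t, ∀ k : Fin n, ((A t).adjugate.mulVec (Ψ t)) k = (A t).det * Θ k) ∧
    (Tendsto (fun t => ∫ s in (0:ℝ)..t, ((A s).det)^2) atTop atTop →
      ∀ γ > (0:ℝ), ∀ k : Fin n, ∀ θhat : ℝ → ℝ,
        (∀ t, HasDerivAt θhat
          (γ * (A t).det * (((A t).adjugate.mulVec (Ψ t)) k - (A t).det * θhat t)) t) →
        Tendsto θhat atTop (nhds (Θ k))) := by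
  have hadj : ∀ t, ∀ k : Fin n, ((A t).adjugate.mulVec (Ψ t)) k = (A t).det * Θ k := by
    intro t k
    rw [hΨ t, mulVec_mulVec, Matrix.adjugate_mul, smul_mulVec, one_mulVec]
    rfl
  refine ⟨hadj, ?_⟩
  intro hInt γ hγ k θhat hder
  set f : ℝ → ℝ := fun t => (A t).det with hf
  have hfc : Continuous f := Continuous.matrix_det hA
  have hf2c : Continuous (fun t => f t ^ 2) := hfc.pow 2
  set F : ℝ → ℝ := fun t => ∫ s in (0:ℝ)..t, f s ^ 2 with hF
  have hFder : ∀ t, HasDerivAt F (f t ^ 2) t := fun t =>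
    (hf2c.integral_hasStrictDerivAt 0 t).hasDerivAt
  set e : ℝ → ℝ := fun t => θhat t - Θ k with he
  have heder : ∀ t, HasDerivAt e (-(γ * f t ^ 2) * e t) t := by
    intro t
    have h := (hder t).sub_const (Θ k)
    refine h.congr_deriv ?_.symm
    rw [hadj t k]
    simp only [he, hf]
    ring
  set g : ℝ → ℝ := fun t => e t * Real.exp (γ * F t) with hg
  have hgder : ∀ t, HasDerivAt g 0 t := by
    intro t
    have h1 : HasDerivAt (fun t => Real.exp (γ * F t)) (Real.exp (γ * F t) * (γ * f t ^ 2)) t :=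
      (((hFder t).const_mul γ).exp)
    have h2 := (heder t).mul h1
    refine h2.congr_deriv ?_
    ring
  have hgc : ∀ t, g t = g 0 :=
    fun t => is_const_of_deriv_eq_zero (fun x => (hgder x).differentiableAt)
      (fun x => (hgder x).deriv) t 0
  have hF0 : F 0 = 0 := intervalIntegral.integral_same
  have hrep : ∀ t, θhat t = Θ k + e 0 * Real.exp (-(γ * F t)) := by
    intro t
    have := hgc t
    simp only [hg, hF0, mul_zero, Real.exp_zero, mul_one] at this
    have hexp : Real.exp (γ * F t) ≠ 0 := Real.exp_ne_zero _
    have : e t = e 0 * Real.exp (-(γ * F t)) := by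
      rw [Real.exp_neg]
      field_simp
      linarith [this]
    simp only [he] at this ⊢
    linarith
  have hlim : Tendsto (fun t => Real.exp (-(γ * F t))) atTop (nhds 0) := by
    exact Real.tendsto_exp_atBot.comp (tendsto_neg_atTop_atBot.comp (hInt.const_mul_atTop hγ))
  have : Tendsto (fun t => Θ k + e 0 * Real.exp (-(γ * F t))) atTop (nhds (Θ k + e 0 * 0)) :=
    tendsto_const_nhds.add (tendsto_const_nhds.mul hlim)
  rw [mul_zero, add_zero] at this
  exact this.congr (fun t => (hrep t).symm)
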